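/- Fix μ real, c > 0, and let ν = μ + is with s ≠ 0. Define h(r) = Σ_{j≥0} d_j² r^j with d_j² = 2^{-ν-2j}/(j! Γ(j+1+ν)). Then for every p ∈ ℕ and 0 < r ≤ 1, |∂_r^p h(r)| ≤ C e^{π|s|} for a constant C depending only on μ and p. -/

import Mathlib

open Complex

-- helper 1: |Γ z| ≤ Γ (re z) for 0 < re z
lemma absGamma_le {z : ℂ} (hz : 0 < z.re) :
    ‖(Complex.Gamma z)‖ ≤ Real.Gamma z.re := by
  rw [Complex.Gamma_eq_integral hz, Real.Gamma_eq_integral hz, Complex.GammaIntegral]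
  calc ‖(∫ x in Set.Ioi (0:ℝ), ↑(Real.exp (-x)) * (x:ℂ) ^ (z - 1))‖
      ≤ ∫ x in Set.Ioi (0:ℝ), ‖(↑(Real.exp (-x)) * (x:ℂ) ^ (z - 1))‖ :=
        by exact MeasureTheory.norm_integral_le_integral_norm _
    _ = ∫ x in Set.Ioi (0:ℝ), Real.exp (-x) * x ^ (z.re - 1) := by
        apply MeasureTheory.setIntegral_congr_fun measurableSet_Ioi
        intro x hx
        simp only [norm_mul, Complex.norm_real, Real.norm_eq_abs,
          abs_of_pos (Real.exp_pos _)]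
        rw [Complex.norm_cpow_eq_rpow_re_of_pos hx,
          Complex.sub_re, Complex.one_re]

lemma realGamma_le_max {a b x : ℝ} (ha : 0 < a) (hab : a ≤ b) (hx : x ∈ Set.Icc a b) :
    Real.Gamma x ≤ max (Real.Gamma a) (Real.Gamma b) :=
  Real.convexOn_Gamma.le_on_segment (Set.mem_Ioi.2 ha) (Set.mem_Ioi.2 (lt_of_lt_of_le ha hab))
    ((segment_eq_Icc hab) ▸ hx)

lemma sinh_le_mul_exp {y : ℝ} (hy : 0 ≤ y) : Real.sinh y ≤ y * Real.exp y := by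
  have h1 : (-(2*y)) + 1 ≤ Real.exp (-(2*y)) := Real.add_one_le_exp _
  have h2 : Real.exp (-y) * Real.exp (-y) = Real.exp (-(2*y)) := by
    rw [← Real.exp_add]; ring_nf
  have h3 : Real.exp (-y) * Real.exp y = 1 := by rw [← Real.exp_add]; simp
  have h4 := Real.exp_pos y
  have h5 := Real.exp_pos (-y)
  rw [Real.sinh_eq]
  nlinarith [h1, h2, h3, h4, h5]

lemma abs_sin_le_gen (z : ℂ) :
    ‖(Complex.sin z)‖
      ≤ |Real.sin z.re| * Real.cosh |z.im| + Real.sinh |z.im| := by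
  rw [Complex.sin_eq]
  calc ‖(Complex.sin z.re * Complex.cosh z.im + Complex.cos z.re * Complex.sinh z.im * I)‖
      ≤ ‖(Complex.sin z.re * Complex.cosh z.im)‖
        + ‖(Complex.cos z.re * Complex.sinh z.im * I)‖ := norm_add_le _ _
    _ = |Real.sin z.re| * |Real.cosh z.im| + |Real.cos z.re| * |Real.sinh z.im| := by
        simp [← Complex.ofReal_sin, ← Complex.ofReal_cos, ← Complex.ofReal_cosh,
          ← Complex.ofReal_sinh, norm_mul, Complex.norm_real]
    _ ≤ |Real.sin z.re| * Real.cosh |z.im| + 1 * Real.sinh |z.im| := by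
        rw [abs_of_pos (Real.cosh_pos _), ← Real.cosh_abs, ← Real.abs_sinh]
        gcongr
        exact Real.abs_cos_le_one _
    _ = |Real.sin z.re| * Real.cosh |z.im| + Real.sinh |z.im| := by ring

lemma norm_sin_le_exp (z : ℂ) : ‖(Complex.sin z)‖ ≤ Real.exp |z.im| := by
  refine (abs_sin_le_gen z).trans ?_
  have h1 : |Real.sin z.re| ≤ 1 := Real.abs_sin_le_one _
  have h2 : 0 < Real.cosh |z.im| := Real.cosh_pos _
  have h3 : Real.cosh |z.im| + Real.sinh |z.im| = Real.exp |z.im| := Real.cosh_add_sinh _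
  nlinarith

lemma norm_sin_le_mul (z : ℂ) :
    ‖(Complex.sin z)‖ ≤ (|z.re| + |z.im|) * Real.exp |z.im| := by
  refine (abs_sin_le_gen z).trans ?_
  have h1 : |Real.sin z.re| ≤ |z.re| := Real.abs_sin_le_abs
  have h3 : Real.cosh |z.im| + Real.sinh |z.im| = Real.exp |z.im| := Real.cosh_add_sinh _
  have h4 : 0 ≤ Real.sinh |z.im| := Real.sinh_nonneg_iff.2 (abs_nonneg _)
  have h5 : Real.sinh |z.im| ≤ |z.im| * Real.exp |z.im| := sinh_le_mul_exp (abs_nonneg _)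
  have h2 : 0 < Real.cosh |z.im| := Real.cosh_pos _
  nlinarith [abs_nonneg z.re, abs_nonneg z.im]

lemma Gamma_ne_zero_im {z : ℂ} (hz : z.im ≠ 0) : Complex.Gamma z ≠ 0 :=
  Complex.Gamma_ne_zero (fun m h => hz (by rw [h]; simp))

lemma sin_ne_zero_im {z : ℂ} (hz : z.im ≠ 0) : Complex.sin z ≠ 0 := by
  intro h
  rcases Complex.sin_eq_zero_iff.1 h with ⟨k, hk⟩
  apply hz
  rw [hk]
  simp [Complex.mul_im]

lemma Gamma_shift (z : ℂ) (hz : z.im ≠ 0) (m : ℕ) :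
    Complex.Gamma (z + m) = Complex.Gamma z * ∏ i ∈ Finset.range m, (z + i) := by
  induction m with
  | zero => simp
  | succ n ih =>
    have h1 : z + (n+1 : ℕ) = (z + n) + 1 := by push_cast; ring
    have h2 : z + (n:ℂ) ≠ 0 := by
      intro h
      apply hz
      have := congrArg Complex.im h
      simpa using this
    rw [h1, Complex.Gamma_add_one _ h2, ih, Finset.prod_range_succ]
    ring

/-- reflection in abs form: for z with im ≠ 0,
    (abs (Γ z))⁻¹ = abs (Γ (1-z)) * abs (sin (π z)) / π -/
lemma inv_abs_Gamma_eq {z : ℂ} (hz : z.im ≠ 0) :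
    (‖(Complex.Gamma z)‖)⁻¹
      = ‖(Complex.Gamma (1 - z))‖ * ‖(Complex.sin (Real.pi * z))‖
        / Real.pi := by
  have key := Complex.Gamma_mul_Gamma_one_sub z
  have h1 : ‖(Complex.Gamma z)‖ * ‖(Complex.Gamma (1 - z))‖
      = Real.pi / ‖(Complex.sin (Real.pi * z))‖ := by
    rw [← norm_mul, key, norm_div]
    congr 1
    simp [Complex.norm_real, abs_of_pos Real.pi_pos]
  have hΓ : ‖(Complex.Gamma z)‖ ≠ 0 := by
    simpa using Gamma_ne_zero_im hz
  have hΓ' : ‖(Complex.Gamma (1 - z))‖ ≠ 0 := by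
    simp only [ne_eq, norm_eq_zero]
    apply Gamma_ne_zero_im
    simpa using hz
  have hsin : ‖(Complex.sin (Real.pi * z))‖ ≠ 0 := by
    simp only [ne_eq, norm_eq_zero]
    apply sin_ne_zero_im
    simp [Complex.mul_im, hz, Real.pi_ne_zero]
  have hπ : Real.pi = ‖(Complex.Gamma z)‖ * ‖(Complex.Gamma (1 - z))‖
      * ‖(Complex.sin (Real.pi * z))‖ := by
    rw [h1, div_mul_cancel₀ _ hsin]
  rw [eq_div_iff Real.pi_ne_zero, inv_mul_eq_iff_eq_mul₀ hΓ]
  linarith [hπ]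

set_option maxHeartbeats 1000000 in
lemma inv_norm_Gamma_bound (μ : ℝ) : ∃ B : ℝ, 0 ≤ B ∧ ∀ s : ℝ, s ≠ 0 → ∀ j : ℕ,
    (‖(Complex.Gamma ((j:ℂ) + 1 + ((μ:ℂ) + s * I)))‖)⁻¹
      ≤ B * 2 ^ j * Real.exp (Real.pi * |s|) := by
  set G1 : ℝ := max (Real.Gamma (1/2)) (Real.Gamma (max (1/2) (-μ))) with hG1
  set G2 : ℝ := max (Real.Gamma (1/2)) (Real.Gamma (3/2)) with hG2
  have hG1pos : 0 < G1 := lt_max_of_lt_left (Real.Gamma_pos_of_pos (by norm_num))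
  have hG2pos : 0 < G2 := lt_max_of_lt_left (Real.Gamma_pos_of_pos (by norm_num))
  refine ⟨G1 / Real.pi + 2 * G2 * (2:ℝ) ^ (μ + 1/2), by positivity, ?_⟩
  intro s hs j
  set ν : ℂ := (μ:ℂ) + s * I with hν
  set w : ℂ := (j:ℂ) + 1 + ν with hw
  have hwre : w.re = (j:ℝ) + 1 + μ := by simp [hw, hν]
  have hwim : w.im = s := by simp [hw, hν]
  set x : ℝ := (j:ℝ) + 1 + μ with hx
  have hexp : (0:ℝ) < Real.exp (Real.pi * |s|) := Real.exp_pos _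
  have h2j : (1:ℝ) ≤ 2 ^ j := one_le_pow₀ (by norm_num)
  have hjnn : (0:ℝ) ≤ (j:ℝ) := Nat.cast_nonneg j
  by_cases hcase : x ≤ 1/2
  · -- Case 1 : small real part, direct reflection
    have key := inv_abs_Gamma_eq (z := w) (by rw [hwim]; exact hs)
    have hre : (1 - w).re = 1 - x := by simp [hwre, hx]
    have hb1 : ‖(Complex.Gamma (1 - w))‖ ≤ G1 := by
      have hpos : 0 < (1 - w).re := by rw [hre]; linarith
      have h0 := absGamma_le hpos
      rw [hre] at h0
      refine h0.trans ?_
      refine le_trans (realGamma_le_max (a := 1/2) (b := max (1/2) (-μ)) (by norm_num)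
        (le_max_left _ _) ⟨by linarith, ?_⟩) (le_of_eq rfl)
      have h1x : 1 - x ≤ -μ := by rw [hx]; linarith
      exact le_trans h1x (le_max_right _ _)
    have hb2 : ‖(Complex.sin (Real.pi * w))‖ ≤ Real.exp (Real.pi * |s|) := by
      refine le_trans (norm_sin_le_exp _) ?_
      have him : ((Real.pi : ℂ) * w).im = Real.pi * s := by
        simp [Complex.mul_im, hwim]
      rw [him, abs_mul, abs_of_pos Real.pi_pos]
    rw [key]
    have hmul : ‖(Complex.Gamma (1 - w))‖ * ‖(Complex.sin (Real.pi * w))‖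
        ≤ G1 * Real.exp (Real.pi * |s|) :=
      mul_le_mul hb1 hb2 (norm_nonneg _) hG1pos.le
    have h1 : ‖(Complex.Gamma (1 - w))‖ * ‖(Complex.sin (Real.pi * w))‖
        / Real.pi ≤ G1 * Real.exp (Real.pi * |s|) / Real.pi := by
      apply div_le_div_of_nonneg_right hmul Real.pi_pos.le |>.trans (le_of_eq rfl)
    refine h1.trans ?_
    rw [show G1 * Real.exp (Real.pi * |s|) / Real.pi
        = (G1 / Real.pi) * Real.exp (Real.pi * |s|) by ring]
    have hBle : G1 / Real.pi ≤ (G1 / Real.pi + 2 * G2 * (2:ℝ) ^ (μ + 1/2)) * 2 ^ j := by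
      have h1' : (0:ℝ) ≤ 2 * G2 * (2:ℝ) ^ (μ + 1/2) := by positivity
      nlinarith [h2j, div_nonneg hG1pos.le Real.pi_pos.le]
    exact mul_le_mul_of_nonneg_right hBle hexp.le
  · -- Case 2 : x > 1/2
    push_neg at hcase
    set m : ℕ := ⌊x - 1/2⌋₊ with hm
    have hm1 : (m:ℝ) ≤ x - 1/2 := Nat.floor_le (by linarith)
    have hm2 : x - 1/2 < m + 1 := Nat.lt_floor_add_one _
    set z1 : ℂ := w - m with hz1
    have hz1re : z1.re = x - m := by simp [hz1, hwre]
    have hz1im : z1.im = s := by simp [hz1, hwim]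
    have hx1a : (1:ℝ)/2 ≤ x - m := by linarith
    have hx1b : x - (m:ℝ) < 3/2 := by linarith
    have hshift : Complex.Gamma w = Complex.Gamma z1 * ∏ i ∈ Finset.range m, (z1 + i) := by
      have h0 := Gamma_shift z1 (by rw [hz1im]; exact hs) m
      rw [← h0]
      congr 1
      rw [hz1]; ring
    have hprod : ((1:ℝ)/2)^m ≤ ‖(∏ i ∈ Finset.range m, (z1 + i))‖ := by
      rw [norm_prod]
      rw [show ((1:ℝ)/2)^m = ∏ _i ∈ Finset.range m, ((1:ℝ)/2) by
        rw [Finset.prod_const, Finset.card_range]]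
      refine Finset.prod_le_prod (fun i _ => by norm_num) (fun i _ => ?_)
      calc (1:ℝ)/2 ≤ (z1 + i).re := by
            simp only [Complex.add_re, hz1re, Complex.natCast_re]
            have : (0:ℝ) ≤ (i:ℝ) := Nat.cast_nonneg i
            linarith
        _ ≤ ‖(z1 + i)‖ := Complex.re_le_norm _
    have key := inv_abs_Gamma_eq (z := z1) (by rw [hz1im]; exact hs)
    have h1z1 : (1:ℂ) - z1 ≠ 0 := by
      intro h
      have him := congrArg Complex.im h
      simp only [Complex.sub_im, Complex.one_im, hz1im, Complex.zero_im] at him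
      exact hs (by linarith)
    have hGrec : Complex.Gamma (2 - z1) = (1 - z1) * Complex.Gamma (1 - z1) := by
      have h0 := Complex.Gamma_add_one (1 - z1) h1z1
      rw [← h0]
      congr 1
      ring
    have habs1 : ‖(Complex.Gamma (1 - z1))‖
        = ‖(Complex.Gamma (2 - z1))‖ / ‖(1 - z1)‖ := by
      have hune : ‖(1 - z1)‖ ≠ 0 := (norm_pos_iff.mpr h1z1).ne'
      rw [hGrec, norm_mul, mul_comm, mul_div_assoc, div_self hune, mul_one]
    have hsin_eq : Complex.sin ((Real.pi : ℂ) * z1) = Complex.sin ((Real.pi : ℂ) * (1 - z1)) := by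
      rw [show (Real.pi:ℂ) * (1 - z1) = Real.pi - Real.pi * z1 by ring, Complex.sin_pi_sub]
    have hu_pos : 0 < ‖(1 - z1)‖ := (norm_pos_iff.mpr h1z1)
    have hfrac : ‖(Complex.sin ((Real.pi:ℂ) * z1))‖ / ‖(1 - z1)‖
        ≤ 2 * Real.pi * Real.exp (Real.pi * |s|) := by
      set a : ℝ := |1 - (x - m)| with ha
      set b : ℝ := |s| with hb
      have hbpos : 0 < b := abs_pos.2 hs
      have hure : (1 - z1).re = 1 - (x - m) := by simp [hz1re]
      have huim : (1 - z1).im = -s := by simp [hz1im]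
      have hsinb : ‖(Complex.sin ((Real.pi:ℂ) * z1))‖
          ≤ (Real.pi * a + Real.pi * b) * Real.exp (Real.pi * b) := by
        rw [hsin_eq]
        refine le_trans (norm_sin_le_mul _) ?_
        have hre2 : ((Real.pi:ℂ) * (1 - z1)).re = Real.pi * (1 - (x - m)) := by
          simp [Complex.mul_re, hure, huim]
        have him2 : ((Real.pi:ℂ) * (1 - z1)).im = Real.pi * (-s) := by
          simp [Complex.mul_im, hure, huim]
        rw [hre2, him2, abs_mul, abs_mul, abs_of_pos Real.pi_pos, abs_neg]
      have habs2 : (a + b) / 2 ≤ ‖(1 - z1)‖ := by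
        have h1 := Complex.abs_re_le_norm (1 - z1)
        have h2 := Complex.abs_im_le_norm (1 - z1)
        rw [hure] at h1
        rw [huim, abs_neg] at h2
        rw [ha, hb]
        linarith
      rw [div_le_iff₀ hu_pos]
      have hanneg : 0 ≤ a := abs_nonneg _
      nlinarith [hsinb, habs2, hexp, Real.pi_pos, mul_le_mul_of_nonneg_left habs2
        (by positivity : (0:ℝ) ≤ 2 * Real.pi * Real.exp (Real.pi * b))]
    have hG2b : ‖(Complex.Gamma (2 - z1))‖ ≤ G2 := by
      have hre2 : (2 - z1).re = 2 - (x - m) := by simp [hz1re]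
      have hpos : 0 < (2 - z1).re := by rw [hre2]; linarith
      have h0 := absGamma_le hpos
      rw [hre2] at h0
      refine h0.trans ?_
      exact realGamma_le_max (by norm_num) (by norm_num) ⟨by linarith, by linarith⟩
    have hA1 : (‖(Complex.Gamma z1)‖)⁻¹ ≤ 2 * G2 * Real.exp (Real.pi * |s|) := by
      rw [key, habs1]
      have heq : ‖(Complex.Gamma (2 - z1))‖ / ‖(1 - z1)‖
          * ‖(Complex.sin ((Real.pi:ℂ) * z1))‖ / Real.pi
          = ‖(Complex.Gamma (2 - z1))‖
            * (‖(Complex.sin ((Real.pi:ℂ) * z1))‖ / ‖(1 - z1)‖) / Real.pi := by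
        ring
      rw [heq]
      have hstep : ‖(Complex.Gamma (2 - z1))‖
            * (‖(Complex.sin ((Real.pi:ℂ) * z1))‖ / ‖(1 - z1)‖)
          ≤ G2 * (2 * Real.pi * Real.exp (Real.pi * |s|)) :=
        mul_le_mul hG2b hfrac (by positivity) hG2pos.le
      calc ‖(Complex.Gamma (2 - z1))‖
            * (‖(Complex.sin ((Real.pi:ℂ) * z1))‖ / ‖(1 - z1)‖) / Real.pi
          ≤ G2 * (2 * Real.pi * Real.exp (Real.pi * |s|)) / Real.pi :=
            div_le_div_of_nonneg_right hstep Real.pi_pos.le |>.trans (le_of_eq rfl)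
        _ = 2 * G2 * Real.exp (Real.pi * |s|) := by
            rw [div_eq_iff Real.pi_ne_zero]
            ring
    have hAsplit : (‖(Complex.Gamma w)‖)⁻¹
        ≤ 2^m * (‖(Complex.Gamma z1)‖)⁻¹ := by
      rw [hshift, norm_mul, mul_inv]
      rw [mul_comm]
      refine mul_le_mul_of_nonneg_right ?_ (inv_nonneg.2 (norm_nonneg _))
      have hppos : (0:ℝ) < ((1:ℝ)/2)^m := by positivity
      have := inv_anti₀ hppos hprod
      calc (‖(∏ i ∈ Finset.range m, (z1 + i))‖)⁻¹ ≤ (((1:ℝ)/2)^m)⁻¹ := this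
        _ = 2^m := by rw [← inv_pow]; norm_num
    have hpow : (2:ℝ)^m ≤ (2:ℝ) ^ (μ + 1/2) * 2^j := by
      have h1 : (2:ℝ)^(m:ℕ) = (2:ℝ) ^ ((m:ℝ)) := (Real.rpow_natCast 2 m).symm
      have h2 : (2:ℝ)^(j:ℕ) = (2:ℝ) ^ ((j:ℝ)) := (Real.rpow_natCast 2 j).symm
      rw [h1, h2, ← Real.rpow_add (by norm_num)]
      apply Real.rpow_le_rpow_of_exponent_le (by norm_num)
      rw [hx] at hm1
      linarith
    calc (‖(Complex.Gamma w)‖)⁻¹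
        ≤ 2^m * (‖(Complex.Gamma z1)‖)⁻¹ := hAsplit
      _ ≤ 2^m * (2 * G2 * Real.exp (Real.pi * |s|)) := by
          refine mul_le_mul_of_nonneg_left hA1 (by positivity)
      _ ≤ ((2:ℝ) ^ (μ + 1/2) * 2^j) * (2 * G2 * Real.exp (Real.pi * |s|)) := by
          refine mul_le_mul_of_nonneg_right hpow (by positivity)
      _ ≤ (G1 / Real.pi + 2 * G2 * (2:ℝ) ^ (μ + 1/2)) * 2 ^ j * Real.exp (Real.pi * |s|) := by
          have hg1 : 0 ≤ G1 / Real.pi := div_nonneg hG1pos.le Real.pi_pos.le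
          rw [show (2:ℝ) ^ (μ + 1/2) * 2^j * (2 * G2 * Real.exp (Real.pi * |s|))
            = (2 * G2 * (2:ℝ) ^ (μ + 1/2)) * 2^j * Real.exp (Real.pi * |s|) by ring]
          have hbase : 2 * G2 * (2:ℝ) ^ (μ + 1/2)
              ≤ G1 / Real.pi + 2 * G2 * (2:ℝ) ^ (μ + 1/2) := by linarith
          have h2jp : (0:ℝ) ≤ 2^j := by positivity
          exact mul_le_mul_of_nonneg_right
            (mul_le_mul_of_nonneg_right hbase h2jp) hexp.le

lemma summable_aux (M : ℝ) : Summable (fun j : ℕ => M * ((j:ℝ) / j.factorial)) := by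
  apply Summable.mul_left
  refine Summable.of_nonneg_of_le (fun j => by positivity) (fun j => ?_)
    (Real.summable_pow_div_factorial 2)
  apply div_le_div_of_nonneg_right ?_ (by positivity)
  · exact_mod_cast (Nat.lt_two_pow_self (n := j)).le

lemma hasDerivAt_power_series (d : ℕ → ℂ) (M : ℝ)
    (hd : ∀ j, ‖d j‖ ≤ M * ((1:ℝ)/2)^j / j.factorial) {r : ℝ}
    (hr : r ∈ Set.Ioo (-2:ℝ) 2) :
    HasDerivAt (fun t : ℝ => ∑' j : ℕ, d j * (t:ℂ)^j)
      (∑' j : ℕ, d (j+1) * (((j:ℂ)+1) * (r:ℂ)^j)) r := by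
  have hM : 0 ≤ M := le_trans (norm_nonneg (d 0)) (by simpa using hd 0)
  set g' : ℕ → ℝ → ℂ := fun n y => d n * ((n:ℂ) * (y:ℂ)^(n-1)) with hg'def
  set u : ℕ → ℝ := fun j => M * ((j:ℝ) / j.factorial) with hu_def
  have hkey : ∀ n : ℕ, ((1:ℝ)/2)^n * 2^(n-1) ≤ 1 := by
    intro n
    cases n with
    | zero => norm_num
    | succ k =>
      rw [Nat.add_sub_cancel, pow_succ,
        show ((1:ℝ)/2)^k * (1/2) * 2^k = ((1/2)*2)^k * (1/2) by rw [mul_pow]; ring]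
      norm_num
  have hgb : ∀ (n : ℕ) (y : ℝ), y ∈ Set.Ioo (-2:ℝ) 2 → ‖g' n y‖ ≤ u n := by
    intro n y hy
    have hy2 : |y| ≤ 2 := by
      rw [abs_le]; exact ⟨hy.1.le, hy.2.le⟩
    have h1 : ‖g' n y‖ = ‖d n‖ * ((n:ℝ) * |y|^(n-1)) := by
      simp [hg'def, norm_mul, Complex.norm_natCast, norm_pow,
        Complex.norm_real, abs_mul]
    rw [h1]
    calc ‖d n‖ * ((n:ℝ) * |y|^(n-1))
        ≤ (M * ((1:ℝ)/2)^n / n.factorial) * ((n:ℝ) * 2^(n-1)) := by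
          apply mul_le_mul (hd n) ?_ (by positivity)
            (by positivity)
          exact mul_le_mul_of_nonneg_left (pow_le_pow_left₀ (abs_nonneg _) hy2 _)
            (Nat.cast_nonneg n)
      _ = (M * ((n:ℝ) / n.factorial)) * (((1:ℝ)/2)^n * 2^(n-1)) := by ring
      _ ≤ (M * ((n:ℝ) / n.factorial)) * 1 := by
          exact mul_le_mul_of_nonneg_left (hkey n) (by positivity)
      _ = u n := by rw [mul_one]
  have hderiv : ∀ (n : ℕ) (y : ℝ), y ∈ Set.Ioo (-2:ℝ) 2 →
      HasDerivAt (fun t : ℝ => d n * (t:ℂ)^n) (g' n y) y := by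
    intro n y _
    have h0 : HasDerivAt (fun t : ℝ => ((t:ℂ))^n) ((n:ℂ) * (y:ℂ)^(n-1)) y :=
      (hasDerivAt_pow n ((y:ℝ):ℂ)).comp_ofReal
    simpa [hg'def] using h0.const_mul (d n)
  have hsum0 : Summable (fun n : ℕ => d n * ((0:ℝ):ℂ)^n) := by
    apply Summable.of_norm
    refine Summable.of_nonneg_of_le (fun n => norm_nonneg _) (fun n => ?_)
      ((Real.summable_pow_div_factorial (1/2)).mul_left M)
    rw [norm_mul, norm_pow]
    calc ‖d n‖ * ‖((0:ℝ):ℂ)‖^n ≤ (M * ((1:ℝ)/2)^n / n.factorial) * 1 := by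
          apply mul_le_mul (hd n) ?_ (by positivity) (by positivity)
          simp [pow_le_one₀]
      _ = M * (((1:ℝ)/2)^n / n.factorial) := by ring
  have hmain := hasDerivAt_tsum_of_isPreconnected (summable_aux M) isOpen_Ioo
    (convex_Ioo (-2:ℝ) 2).isPreconnected hderiv hgb
    (by norm_num : (0:ℝ) ∈ Set.Ioo (-2:ℝ) 2) hsum0 hr
  -- identify the sum
  have hsum' : Summable (fun n : ℕ => g' n r) := by
    apply Summable.of_norm
    refine Summable.of_nonneg_of_le (fun n => norm_nonneg _) (fun n => hgb n r hr)
      (summable_aux M)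
  have hzero : g' 0 r = 0 := by simp [hg'def]
  have : (∑' n : ℕ, g' n r) = ∑' j : ℕ, d (j+1) * (((j:ℂ)+1) * (r:ℂ)^j) := by
    rw [Summable.tsum_eq_zero_add hsum', hzero, zero_add]
    apply tsum_congr
    intro j
    simp [hg'def]
  rw [← this]
  exact hmain

lemma shifted_coeff_bound (c : ℕ → ℂ) (M : ℝ) (hM : 0 ≤ M)
    (hc : ∀ j, ‖c j‖ ≤ M * ((1:ℝ)/2)^j / j.factorial) (p j : ℕ) :
    ‖c (j+p) * (((j+p).descFactorial p : ℕ) : ℂ)‖ ≤ M * ((1:ℝ)/2)^j / j.factorial := by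
  have hfact : ((j:ℕ).factorial : ℝ) * ((j+p).descFactorial p : ℝ)
      = ((j+p).factorial : ℝ) := by
    have h0 := Nat.factorial_mul_descFactorial (Nat.le_add_left p j)
    rw [Nat.add_sub_cancel] at h0
    exact_mod_cast h0
  have h1 : ‖c (j+p) * (((j+p).descFactorial p : ℕ) : ℂ)‖
      = ‖c (j+p)‖ * ((j+p).descFactorial p : ℝ) := by
    simp [norm_mul]
  rw [h1]
  calc ‖c (j+p)‖ * ((j+p).descFactorial p : ℝ)
      ≤ (M * ((1:ℝ)/2)^(j+p) / (j+p).factorial) * ((j+p).descFactorial p : ℝ) :=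
        mul_le_mul_of_nonneg_right (hc (j+p)) (Nat.cast_nonneg _)
    _ = M * ((1:ℝ)/2)^(j+p) * (((j+p).descFactorial p : ℝ) / ((j+p).factorial : ℝ)) := by
        ring
    _ = M * ((1:ℝ)/2)^(j+p) * (1 / (j.factorial : ℝ)) := by
        congr 1
        rw [div_eq_div_iff (by positivity : ((j+p).factorial : ℝ) ≠ 0)
          (by positivity : ((j:ℕ).factorial : ℝ) ≠ 0), one_mul]
        linarith [hfact]
    _ ≤ M * ((1:ℝ)/2)^j / j.factorial := by
        rw [pow_add]
        have hp1 : ((1:ℝ)/2)^p ≤ 1 := pow_le_one₀ (by norm_num) (by norm_num)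
        have h2 : ((1:ℝ)/2)^j * ((1:ℝ)/2)^p ≤ ((1:ℝ)/2)^j :=
          (mul_le_mul_of_nonneg_left hp1 (by positivity)).trans_eq (mul_one _)
        have h3 : M * (((1:ℝ)/2)^j * ((1:ℝ)/2)^p) ≤ M * ((1:ℝ)/2)^j :=
          mul_le_mul_of_nonneg_left h2 hM
        calc M * (((1:ℝ)/2)^j * ((1:ℝ)/2)^p) * (1 / (j.factorial:ℝ))
            ≤ M * ((1:ℝ)/2)^j * (1 / (j.factorial:ℝ)) := by
              exact mul_le_mul_of_nonneg_right h3 (by positivity)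
          _ = M * ((1:ℝ)/2)^j / j.factorial := by ring

lemma iteratedDeriv_power_series (c : ℕ → ℂ) (M : ℝ)
    (hc : ∀ j, ‖c j‖ ≤ M * ((1:ℝ)/2)^j / j.factorial) (p : ℕ) :
    ∀ r ∈ Set.Ioo (-2:ℝ) 2,
      iteratedDeriv p (fun t : ℝ => ∑' j : ℕ, c j * (t:ℂ)^j) r
        = ∑' j : ℕ, c (j+p) * (((j+p).descFactorial p : ℕ) : ℂ) * (r:ℂ)^j := by
  have hM : 0 ≤ M := le_trans (norm_nonneg (c 0)) (by simpa using hc 0)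
  induction p with
  | zero =>
    intro r _
    rw [iteratedDeriv_zero]
    apply tsum_congr
    intro j
    simp
  | succ p ih =>
    intro r hr
    rw [iteratedDeriv_succ]
    have hEq : (iteratedDeriv p (fun t : ℝ => ∑' j : ℕ, c j * (t:ℂ)^j))
        =ᶠ[nhds r] (fun t : ℝ => ∑' j : ℕ,
          (c (j+p) * (((j+p).descFactorial p : ℕ) : ℂ)) * (t:ℂ)^j) := by
      filter_upwards [isOpen_Ioo.mem_nhds hr] with y hy
      exact ih y hy
    rw [hEq.deriv_eq]
    set d : ℕ → ℂ := fun j => c (j+p) * (((j+p).descFactorial p : ℕ) : ℂ) with hd_def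
    have hd : ∀ j, ‖d j‖ ≤ M * ((1:ℝ)/2)^j / j.factorial :=
      fun j => shifted_coeff_bound c M hM hc p j
    have hD := (hasDerivAt_power_series d M hd hr).deriv
    rw [hD]
    apply tsum_congr
    intro j
    rw [hd_def]
    have harg : j + 1 + p = j + (p+1) := by omega
    have hdesc : (j + (p+1)).descFactorial (p+1) = (j+1) * ((j+1+p).descFactorial p) := by
      rw [show j + (p+1) = (j+1+p) from by omega, Nat.descFactorial_succ,
        show j+1+p-p = j+1 from by omega]
    simp only [harg, hdesc]
    push_cast
    ring

theorem series_h_deriv_bound (μ : ℝ) (p : ℕ) :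
    ∃ C : ℝ, ∀ s : ℝ, s ≠ 0 → ∀ r : ℝ, 0 < r → r ≤ 1 →
      ‖iteratedDeriv p
        (fun r : ℝ => ∑' j : ℕ,
          (2 : ℂ) ^ (-((μ : ℂ) + s * Complex.I) - 2 * j)
            / ((j : ℕ).factorial * Complex.Gamma ((j : ℂ) + 1 + ((μ : ℂ) + s * Complex.I)))
            * (r : ℂ) ^ j) r‖
        ≤ C * Real.exp (Real.pi * |s|) := by
  obtain ⟨B, hB0, hB⟩ := inv_norm_Gamma_bound μ
  refine ⟨2 * ((2:ℝ) ^ (-μ) * B), ?_⟩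
  intro s hs r hr0 hr1
  set c : ℕ → ℂ := fun j =>
    (2 : ℂ) ^ (-((μ : ℂ) + s * Complex.I) - 2 * j)
      / ((j : ℕ).factorial * Complex.Gamma ((j : ℂ) + 1 + ((μ : ℂ) + s * Complex.I))) with hc_def
  set M : ℝ := (2:ℝ) ^ (-μ) * B * Real.exp (Real.pi * |s|) with hM_def
  have hMnn : 0 ≤ M := by positivity
  have h9 : ∀ j : ℕ, (2:ℝ) ^ (-(j:ℝ)) = ((1:ℝ)/2)^j := fun j => by
    rw [Real.rpow_neg (by norm_num), Real.rpow_natCast, one_div, inv_pow]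
  have hcancel : ∀ j : ℕ, ((1:ℝ)/2)^j * 2^j = 1 := fun j => by
    rw [one_div, inv_pow, inv_mul_cancel₀ (by positivity)]
  have hc : ∀ j, ‖c j‖ ≤ M * ((1:ℝ)/2)^j / j.factorial := by
    intro j
    have hwre : (-((μ : ℂ) + s * Complex.I) - 2 * (j:ℕ)).re = -μ - 2*(j:ℝ) := by
      simp
    have hnum : ‖(2 : ℂ) ^ (-((μ : ℂ) + s * Complex.I) - 2 * (j:ℕ))‖
        = (2:ℝ) ^ (-μ - 2*(j:ℝ)) := by
      rw [show (2:ℂ) = ((2:ℝ):ℂ) by norm_num,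
        Complex.norm_cpow_eq_rpow_re_of_pos (by norm_num : (0:ℝ) < 2)]
      congr 1
    have hden : ‖(((j : ℕ).factorial : ℂ) * Complex.Gamma ((j : ℂ) + 1 + ((μ : ℂ) + s * Complex.I)))‖
        = ((j:ℕ).factorial : ℝ)
          * ‖(Complex.Gamma ((j : ℂ) + 1 + ((μ : ℂ) + s * Complex.I)))‖ := by
      rw [norm_mul, Complex.norm_natCast]
    have hcj : ‖c j‖ = (2:ℝ) ^ (-μ - 2*(j:ℝ)) / ((j:ℕ).factorial : ℝ)
        * (‖(Complex.Gamma ((j : ℂ) + 1 + ((μ : ℂ) + s * Complex.I)))‖)⁻¹ := by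
      rw [hc_def]
      rw [norm_div, hnum, hden, ← div_div, div_eq_mul_inv (_ / _)]
    rw [hcj]
    have hstep : (2:ℝ) ^ (-μ - 2*(j:ℝ)) / ((j:ℕ).factorial : ℝ)
          * (‖(Complex.Gamma ((j : ℂ) + 1 + ((μ : ℂ) + s * Complex.I)))‖)⁻¹
        ≤ (2:ℝ) ^ (-μ - 2*(j:ℝ)) / ((j:ℕ).factorial : ℝ)
          * (B * 2 ^ j * Real.exp (Real.pi * |s|)) :=
      mul_le_mul_of_nonneg_left (hB s hs j) (by positivity)
    refine hstep.trans (le_of_eq ?_)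
    have hsplit : (2:ℝ) ^ (-μ - 2*(j:ℝ))
        = (2:ℝ) ^ (-μ) * (((1:ℝ)/2)^j * ((1:ℝ)/2)^j) := by
      rw [show -μ - 2*(j:ℝ) = -μ + (-(j:ℝ) + -(j:ℝ)) by ring, Real.rpow_add (by norm_num),
        Real.rpow_add (by norm_num), h9 j]
    rw [hsplit, hM_def, div_mul_eq_mul_div]
    congr 1
    calc (2:ℝ) ^ (-μ) * (((1:ℝ)/2)^j * ((1:ℝ)/2)^j) * (B * 2 ^ j * Real.exp (Real.pi * |s|))
        = ((2:ℝ) ^ (-μ) * B * Real.exp (Real.pi * |s|) * ((1:ℝ)/2)^j)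
            * (((1:ℝ)/2)^j * 2^j) := by ring
      _ = (2:ℝ) ^ (-μ) * B * Real.exp (Real.pi * |s|) * ((1:ℝ)/2)^j := by
          rw [hcancel j, mul_one]
  have hrItv : r ∈ Set.Ioo (-2:ℝ) 2 := ⟨by linarith, by linarith⟩
  have key := iteratedDeriv_power_series c M hc p r hrItv
  rw [show (fun r : ℝ => ∑' j : ℕ,
      (2 : ℂ) ^ (-((μ : ℂ) + s * Complex.I) - 2 * j)
        / ((j : ℕ).factorial * Complex.Gamma ((j : ℂ) + 1 + ((μ : ℂ) + s * Complex.I)))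
        * (r : ℂ) ^ j) = (fun t : ℝ => ∑' j : ℕ, c j * (t:ℂ)^j) from rfl, key]
  have hterm : ∀ j : ℕ, ‖c (j+p) * (((j+p).descFactorial p : ℕ) : ℂ) * (r:ℂ)^j‖
      ≤ M * ((1:ℝ)/2)^j := by
    intro j
    rw [norm_mul]
    have h1 : ‖((r:ℝ):ℂ)^j‖ ≤ 1 := by
      rw [norm_pow, Complex.norm_real, Real.norm_eq_abs, abs_of_pos hr0]
      exact pow_le_one₀ hr0.le hr1
    have h2 := shifted_coeff_bound c M hMnn hc p j
    have h3 : M * ((1:ℝ)/2)^j / j.factorial ≤ M * ((1:ℝ)/2)^j := by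
      apply div_le_self (by positivity)
      exact_mod_cast Nat.one_le_iff_ne_zero.2 (Nat.factorial_ne_zero j)
    calc ‖c (j+p) * (((j+p).descFactorial p : ℕ) : ℂ)‖ * ‖((r:ℝ):ℂ)^j‖
        ≤ (M * ((1:ℝ)/2)^j / j.factorial) * 1 :=
          mul_le_mul h2 h1 (norm_nonneg _) (by positivity)
      _ = M * ((1:ℝ)/2)^j / j.factorial := mul_one _
      _ ≤ M * ((1:ℝ)/2)^j := h3
  have hsumgeo : Summable (fun j : ℕ => M * ((1:ℝ)/2)^j) :=
    (summable_geometric_of_lt_one (by norm_num) (by norm_num)).mul_left M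
  have hsumnorm : Summable (fun j : ℕ =>
      ‖c (j+p) * (((j+p).descFactorial p : ℕ) : ℂ) * (r:ℂ)^j‖) :=
    Summable.of_nonneg_of_le (fun j => norm_nonneg _) hterm hsumgeo
  calc ‖(∑' j : ℕ, c (j+p) * (((j+p).descFactorial p : ℕ) : ℂ) * (r:ℂ)^j)‖
      ≤ ∑' j : ℕ, ‖c (j+p) * (((j+p).descFactorial p : ℕ) : ℂ) * (r:ℂ)^j‖ := by
        exact norm_tsum_le_tsum_norm hsumnorm
    _ ≤ ∑' j : ℕ, M * ((1:ℝ)/2)^j := Summable.tsum_le_tsum hterm hsumnorm hsumgeo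
    _ = M * 2 := by rw [tsum_mul_left, tsum_geometric_two]
    _ ≤ 2 * ((2:ℝ) ^ (-μ) * B) * Real.exp (Real.pi * |s|) := by
        rw [hM_def]
        ring_nf
        exact le_refl _
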